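/- Let f be convex on W = conv(S) with curvature at most M. Suppose w ∈ W, η ∈ [0,1], and d ∈ S satisfy ⟨∇f(w), d⟩ ≤ min_{d'∈S} ⟨∇f(w), d'⟩ + ε. Then f((1-η)w + ηd) ≤ min_{d'∈S} f((1-η)w + ηd') + η(ε + (M/2)η). -/

import Mathlib

open RealInnerProductSpace

lemma grad_convex_aux {n : ℕ} {W : Set (EuclideanSpace ℝ (Fin n))}
    {f : EuclideanSpace ℝ (Fin n) → ℝ} {G w y : EuclideanSpace ℝ (Fin n)}
    (hf : ConvexOn ℝ W f) (hgrad : HasGradientAt f G w)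
    (hw : w ∈ W) (hy : y ∈ W) :
    f w + ⟪G, y - w⟫ ≤ f y := by
  have hline : HasDerivAt (fun t : ℝ => w + t • (y - w)) (y - w) 0 := by
    simpa using ((hasDerivAt_id (0:ℝ)).smul_const (y - w)).const_add w
  have hφ : HasDerivAt (fun t : ℝ => f (w + t • (y - w))) ⟪G, y - w⟫ 0 := by
    have h := HasFDerivAt.comp_hasDerivAt (x := (0:ℝ))
      (by simpa using hgrad.hasFDerivAt) hline
    exact h
  have hslope : Filter.Tendsto (slope (fun t : ℝ => f (w + t • (y - w))) 0)
      (nhdsWithin 0 {(0:ℝ)}ᶜ) (nhds ⟪G, y - w⟫) :=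
    hasDerivAt_iff_tendsto_slope.mp hφ
  have hslope' := hslope.mono_left (nhdsWithin_mono 0 (by
    intro t ht
    exact Set.mem_compl_singleton_iff.mpr (ne_of_gt (Set.mem_Ioi.mp ht)) : Set.Ioi (0:ℝ) ⊆ {(0:ℝ)}ᶜ))
  have hbound : ∀ᶠ t in nhdsWithin (0:ℝ) (Set.Ioi 0),
      slope (fun t : ℝ => f (w + t • (y - w))) 0 t ≤ f y - f w := by
    filter_upwards [Ioc_mem_nhdsGT_of_mem (Set.mem_Ico.mpr ⟨le_refl 0, one_pos⟩)] with t ht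
    obtain ⟨ht0, ht1⟩ := ht
    have hconv := hf.2 hw hy (by linarith : (0:ℝ) ≤ 1 - t) ht0.le (by ring)
    have hpt : w + t • (y - w) = (1 - t) • w + t • y := by
      simp [smul_sub, sub_smul]; abel
    have hle : f (w + t • (y - w)) ≤ (1 - t) * f w + t * f y := by rw [hpt]; simpa using hconv
    rw [slope_def_field]

    simp only [zero_smul, add_zero, sub_zero]
    rw [div_le_iff₀ ht0]
    nlinarith
  have := le_of_tendsto hslope' hbound
  linarith

theorem stmt_9 (n : ℕ) (M ε : ℝ) (hε : 0 ≤ ε)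
    (S : Set (EuclideanSpace ℝ (Fin n))) (hS : IsCompact S)
    (W : Set (EuclideanSpace ℝ (Fin n))) (hW : W = convexHull ℝ S)
    (f : EuclideanSpace ℝ (Fin n) → ℝ) (g : EuclideanSpace ℝ (Fin n) → EuclideanSpace ℝ (Fin n))
    (hf : ConvexOn ℝ W f)
    (hg : ∀ x ∈ W, HasGradientAt f (g x) x)
    (hcurv : ∀ w ∈ W, ∀ d ∈ S, ∀ η ∈ Set.Icc (0 : ℝ) 1,
      f ((1 - η) • w + η • d) ≤ f w + η * ⟪g w, d - w⟫ + (M / 2) * η ^ 2)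
    (w d : EuclideanSpace ℝ (Fin n)) (hw : w ∈ W) (hd : d ∈ S)
    (η : ℝ) (hη : η ∈ Set.Icc (0 : ℝ) 1)
    (happrox : ∀ d' ∈ S, ⟪g w, d⟫ ≤ ⟪g w, d'⟫ + ε) :
    ∀ d' ∈ S, f ((1 - η) • w + η • d) ≤ f ((1 - η) • w + η • d') + η * (ε + (M / 2) * η) := by
  intro d' hd'
  obtain ⟨hη0, hη1⟩ := hη
  have hSW : S ⊆ W := hW ▸ subset_convexHull ℝ S
  have hWconv : Convex ℝ W := hW ▸ convex_convexHull ℝ S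
  have hyW : (1 - η) • w + η • d' ∈ W :=
    hWconv hw (hSW hd') (by linarith) hη0 (by ring)
  -- curvature bound
  have h1 := hcurv w hw d hd η ⟨hη0, hη1⟩
  -- gradient convexity lower bound at d'
  have h2 : f w + ⟪g w, ((1 - η) • w + η • d') - w⟫ ≤ f ((1 - η) • w + η • d') :=
    grad_convex_aux hf (hg w hw) hw hyW
  have hinner : ⟪g w, ((1 - η) • w + η • d') - w⟫ = η * ⟪g w, d' - w⟫ := by
    have : ((1 - η) • w + η • d') - w = η • (d' - w) := by
      simp [smul_sub, sub_smul]; abel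
    rw [this, real_inner_smul_right]
  have h3 := happrox d' hd'
  have hdw : ⟪g w, d - w⟫ ≤ ⟪g w, d' - w⟫ + ε := by
    simp only [inner_sub_right] at *; linarith
  nlinarith [mul_le_mul_of_nonneg_left hdw hη0]
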